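/- Let G be a group, let m ≥ 1, and let φ be an automorphism of G such that g⁻¹φ(g) ∈ γ_m(G) for every g ∈ G. Then for every j ≥ 0 and every c ∈ γ_j(G), one has c⁻¹φ(c) ∈ γ_{j+m}(G). -/

import Mathlib

set_option maxHeartbeats 1000000

open Subgroup
open scoped commutatorElement

/-- Three subgroups lemma modulo a normal subgroup. -/
theorem three_subgroups_mod {G : Type*} [Group G] (H K L N : Subgroup G) [N.Normal]
    (h1 : ⁅⁅K, L⁆, H⁆ ≤ N) (h2 : ⁅⁅L, H⁆, K⁆ ≤ N) : ⁅⁅H, K⁆, L⁆ ≤ N := by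
  set f := QuotientGroup.mk' N with hf
  have key : ∀ A B : Subgroup G, ⁅A, B⁆ ≤ N ↔ ⁅A.map f, B.map f⁆ = ⊥ := fun A B => by
    rw [← Subgroup.map_commutator, Subgroup.map_eq_bot_iff, QuotientGroup.ker_mk']
  rw [key, Subgroup.map_commutator] at h1 h2 ⊢
  exact Subgroup.commutator_commutator_eq_bot_of_rotate h1 h2

theorem lcs_comm_le {G : Type*} [Group G] :
    ∀ j i : ℕ, ⁅(⊤ : Subgroup G).lowerCentralSeries i, (⊤ : Subgroup G).lowerCentralSeries j⁆ ≤ (⊤ : Subgroup G).lowerCentralSeries (i + j + 1)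
  | 0, i => by
    rw [Subgroup.lowerCentralSeries_zero]
    exact le_of_eq rfl
  | j + 1, i => by
    rw [Subgroup.commutator_comm]
    show ⁅⁅(⊤ : Subgroup G).lowerCentralSeries j, ⊤⁆, (⊤ : Subgroup G).lowerCentralSeries i⁆ ≤ _
    refine three_subgroups_mod _ _ _ _ ?_ ?_
    · rw [Subgroup.commutator_comm (⊤ : Subgroup G)]
      have := lcs_comm_le (G := G) j (i + 1)
      show ⁅(⊤ : Subgroup G).lowerCentralSeries (i+1), (⊤ : Subgroup G).lowerCentralSeries j⁆ ≤ _
      convert this using 2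
      omega
    · refine le_trans (Subgroup.commutator_mono (lcs_comm_le j i) le_rfl) ?_
      show (⊤ : Subgroup G).lowerCentralSeries (i + j + 2) ≤ _
      apply le_of_eq; congr 1

theorem commute_helper {H : Type*} [Group H] (c g b a : H)
    (hb : ∀ y : H, Commute b y) (hac : Commute a c) : ⁅c * b, g * a⁆ = ⁅c, g⁆ := by
  have h1 : b * (g * a) = (g * a) * b := hb (g * a)
  have h2 : a * c⁻¹ = c⁻¹ * a := hac.inv_right.eq
  have e1 : ⁅c * b, g * a⁆ = c * (b * (g * a) * b⁻¹) * c⁻¹ * (g * a)⁻¹ := by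
    rw [commutatorElement_def]; group
  rw [e1, h1, mul_inv_cancel_right]
  have e2 : c * (g * a) * c⁻¹ * (g * a)⁻¹ = c * g * (a * c⁻¹) * a⁻¹ * g⁻¹ := by group
  rw [e2, h2, commutatorElement_def]
  group

/-!
STATEMENT 2: Let `G` be a group, `m ≥ 1`, and `φ` an automorphism of `G` with
`g⁻¹ * φ g ∈ γ_m(G)` for all `g`.  Then for all `j ≥ 0` and all `c ∈ γ_j(G)` one has
`c⁻¹ * φ c ∈ γ_{j+m}(G)`.  Here `γ` is the lower central series
(`(⊤ : Subgroup G).lowerCentralSeries 0 = G`, `(⊤ : Subgroup G).lowerCentralSeries (n+1) = [G, (⊤ : Subgroup G).lowerCentralSeries n]`).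
-/
theorem statement2 {G : Type*} [Group G] (m : ℕ) (hm : 1 ≤ m) (φ : G ≃* G)
    (hφ : ∀ g : G, g⁻¹ * φ g ∈ (⊤ : Subgroup G).lowerCentralSeries m) :
    ∀ j : ℕ, ∀ c ∈ (⊤ : Subgroup G).lowerCentralSeries j, c⁻¹ * φ c ∈ (⊤ : Subgroup G).lowerCentralSeries (j + m) := by
  intro j
  induction j with
  | zero => intro c _; simpa using hφ c
  | succ j ih =>
    set N := (⊤ : Subgroup G).lowerCentralSeries (j + 1 + m) with hN
    set f := QuotientGroup.mk' N with hf
    set ψ := f.comp φ.toMonoidHom with hψ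
    have hmem : ∀ x : G, x ∈ f.eqLocus ψ ↔ x⁻¹ * φ x ∈ N := by
      intro x
      have : x ∈ f.eqLocus ψ ↔ (x : G ⧸ N) = (φ x : G ⧸ N) := Iff.rfl
      rw [this, QuotientGroup.eq]
    have key : (⊤ : Subgroup G).lowerCentralSeries (j + 1) ≤ f.eqLocus ψ := by
      show ⁅(⊤ : Subgroup G).lowerCentralSeries j, ⊤⁆ ≤ _
      rw [Subgroup.commutator_le]
      intro c hc g _
      rw [hmem]
      -- reduce to an identity in the quotient
      have goal_iff : (f ⁅c, g⁆ = f (φ ⁅c, g⁆)) ↔ (⁅c, g⁆⁻¹ * φ ⁅c, g⁆ ∈ N) :=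
        QuotientGroup.eq
      rw [← goal_iff]
      set b := c⁻¹ * φ c with hb
      set a := g⁻¹ * φ g with ha
      have hbmem : b ∈ (⊤ : Subgroup G).lowerCentralSeries (j + m) := ih c hc
      have hamem : a ∈ (⊤ : Subgroup G).lowerCentralSeries m := hφ g
      have hφc : φ c = c * b := by rw [hb]; group
      have hφg : φ g = g * a := by rw [ha]; group
      have hbcom : ∀ y : G ⧸ N, Commute (f b) y := by
        intro y
        induction y using QuotientGroup.induction_on with
        | H x =>
          have : ⁅b, x⁆ ∈ N := by
            have : ⁅b, x⁆ ∈ ⁅(⊤ : Subgroup G).lowerCentralSeries (j + m), (⊤ : Subgroup G)⁆ :=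
              Subgroup.commutator_mem_commutator hbmem (Subgroup.mem_top x)
            have e : (⊤ : Subgroup G).lowerCentralSeries (j + 1 + m) =
                ⁅(⊤ : Subgroup G).lowerCentralSeries (j + m), (⊤ : Subgroup G)⁆ := by
              have : j + 1 + m = (j + m) + 1 := by omega
              rw [this]; rfl
            rwa [hN, e]
          have h1 : f ⁅b, x⁆ = 1 := by
            rwa [← QuotientGroup.ker_mk' N, MonoidHom.mem_ker] at this
          rw [map_commutatorElement] at h1
          exact commutatorElement_eq_one_iff_commute.mp h1
      have hacom : Commute (f a) (f c) := by
        have : ⁅a, c⁆ ∈ N := by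
          have h := lcs_comm_le (G := G) j m (Subgroup.commutator_mem_commutator hamem hc)
          have e : m + j + 1 = j + 1 + m := by omega
          rwa [e] at h
        have h1 : f ⁅a, c⁆ = 1 := by
          rwa [← QuotientGroup.ker_mk' N, MonoidHom.mem_ker] at this
        rw [map_commutatorElement] at h1
        exact commutatorElement_eq_one_iff_commute.mp h1
      calc f ⁅c, g⁆ = ⁅f c, f g⁆ := map_commutatorElement f c g
        _ = ⁅f c * f b, f g * f a⁆ := (commute_helper (f c) (f g) (f b) (f a) hbcom hacom).symm
        _ = ⁅f (c * b), f (g * a)⁆ := by rw [map_mul f c b, map_mul f g a]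
        _ = f ⁅c * b, g * a⁆ := (map_commutatorElement f _ _).symm
        _ = f (φ ⁅c, g⁆) := by rw [map_commutatorElement φ, hφc, hφg, map_commutatorElement f]
    intro c hc
    exact (hmem c).mp (key hc)
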